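/- (Sharpness, interval case) Let f₁, …, f_n be a Chebyshev system of order n on a compact interval [a,b] and let a < x₁ < x₂ < ⋯ < x_n < b be given points. Then there exists a continuous function f : [a,b] → ℝ such that f(x) = 0 exactly for x ∈ {x₁, …, x_n}, such that on the n+1 subintervals [a,x₁), (x₁,x₂), …, (x_n,b] determined by these points f is nonzero with alternating constant sign (i.e., there is ε ∈ {1,−1} with ε·(−1)^i·f(x) > 0 for all x in the interior of the i-th subinterval, i = 0, …, n), and such that ∫_a^b f(x)·f_j(x) dx = 0 for every j = 1, …, n. -/

import Mathlib

open Set MeasureTheory Filter Topology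

lemma chebAux_intInt {a b : ℝ} (hab : a ≤ b) {f : ℝ → ℝ}
    (hf : ContinuousOn f (Set.Icc a b)) : IntervalIntegrable f volume a b := by
  apply ContinuousOn.intervalIntegrable
  rwa [uIcc_of_le hab]

lemma chebAux_zero {a b : ℝ} (hab : a < b) {q : ℝ → ℝ} (hq : ContinuousOn q (Set.Icc a b))
    (h0 : ∀ t ∈ Set.Icc a b, 0 ≤ q t) (hint : (∫ t in a..b, q t) ≤ 0) :
    ∀ t ∈ Set.Icc a b, q t = 0 := by
  by_contra hcon
  push_neg at hcon
  obtain ⟨t₀, ht₀, hne⟩ := hcon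
  have hpos : 0 < q t₀ := lt_of_le_of_ne (h0 t₀ ht₀) (Ne.symm hne)
  have hcw := hq t₀ ht₀
  rw [ContinuousWithinAt, Metric.tendsto_nhdsWithin_nhds] at hcw
  obtain ⟨δ, hδ, hball⟩ := hcw (q t₀ / 2) (by linarith)
  set c := max a (t₀ - δ/2) with hc
  set d := min b (t₀ + δ/2) with hd
  have hac : a ≤ c := le_max_left _ _
  have hdb : d ≤ b := min_le_left _ _
  have hcd : c < d := by
    rcases ht₀ with ⟨h1, h2⟩
    apply max_lt <;> apply lt_min <;> linarith
  have hsub : Set.Ioo c d ⊆ Set.Icc a b := fun t ht =>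
    ⟨hac.trans ht.1.le, ht.2.le.trans hdb⟩
  have hmid : ∀ t ∈ Set.Ioo c d, 0 < q t := by
    intro t ht
    have h1 : t₀ - δ/2 < t := lt_of_le_of_lt (le_max_right _ _) ht.1
    have h2 : t < t₀ + δ/2 := lt_of_lt_of_le ht.2 (min_le_right _ _)
    have hdist : dist t t₀ < δ := by
      rw [Real.dist_eq]
      rw [abs_lt]; constructor <;> linarith
    have := hball (hsub ht) hdist
    rw [Real.dist_eq, abs_lt] at this
    linarith
  have hint1 : IntervalIntegrable q volume a b := chebAux_intInt hab.le hq
  have hIac : IntervalIntegrable q volume a c :=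
    hint1.mono_set (by rw [uIcc_of_le (hac), uIcc_of_le hab.le]; exact Icc_subset_Icc le_rfl (hdb.trans' hcd.le))
  have hIcd : IntervalIntegrable q volume c d :=
    hint1.mono_set (by rw [uIcc_of_le hcd.le, uIcc_of_le hab.le]; exact Icc_subset_Icc hac hdb)
  have hIdb : IntervalIntegrable q volume d b :=
    hint1.mono_set (by rw [uIcc_of_le hdb, uIcc_of_le hab.le]; exact Icc_subset_Icc (hac.trans hcd.le) le_rfl)
  have h1 : 0 < ∫ t in c..d, q t := intervalIntegral.intervalIntegral_pos_of_pos_on hIcd hmid hcd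
  have h2 : 0 ≤ ∫ t in a..c, q t := by
    apply intervalIntegral.integral_nonneg hac
    intro u hu; exact h0 u ⟨hu.1, hu.2.trans (hdb.trans' hcd.le)⟩
  have h3 : 0 ≤ ∫ t in d..b, q t := by
    apply intervalIntegral.integral_nonneg hdb
    intro u hu; exact h0 u ⟨(hac.trans hcd.le).trans hu.1, hu.2⟩
  have hs1 : (∫ t in a..c, q t) + (∫ t in c..d, q t) = ∫ t in a..d, q t :=
    intervalIntegral.integral_add_adjacent_intervals hIac hIcd
  have hs2 : (∫ t in a..d, q t) + (∫ t in d..b, q t) = ∫ t in a..b, q t :=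
    intervalIntegral.integral_add_adjacent_intervals (hIac.trans hIcd) hIdb
  linarith

lemma chebA1 {n : ℕ} {a b : ℝ} (hab : a < b) {F : Fin n → ℝ → ℝ}
    (hcheb : ∀ c : Fin n → ℝ, c ≠ 0 →
      {x ∈ Set.Icc a b | ∑ j, c j * F j x = 0}.encard ≤ (n - 1 : ℕ))
    (x : Fin n → ℝ) {c : Fin n → ℝ} (hc : c ≠ 0)
    (hz : ∀ t ∈ Set.Icc a b \ Set.range x, ∑ j, c j * F j t = 0) : False := by
  have hsub : Set.Icc a b \ Set.range x ⊆ {t ∈ Set.Icc a b | ∑ j, c j * F j t = 0} :=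
    fun t ht => ⟨ht.1, hz t ht⟩
  have hinf : (Set.Icc a b \ Set.range x).Infinite :=
    (Set.Icc_infinite hab).diff (Set.finite_range x)
  have htop := (hinf.mono hsub).encard_eq
  have h2 := hcheb c hc
  rw [htop] at h2
  simp at h2

lemma chebSign {n : ℕ} {x : Fin n → ℝ} {t : ℝ} (i : ℕ) (hi : i ≤ n)
    (hlow : ∀ k : Fin n, (k : ℕ) < i → x k < t)
    (hhigh : ∀ k : Fin n, i ≤ (k : ℕ) → t < x k) :
    0 < (-1 : ℝ) ^ (n + i) * ∏ k, (t - x k) := by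
  classical
  set P : Fin n → Prop := fun k => (k : ℕ) < i with hP
  have hsplit := Finset.prod_filter_mul_prod_filter_not Finset.univ P (fun k => (t - x k))
  have hcard1 : (Finset.univ.filter P).card = i := by
    have : Finset.univ.filter P = Finset.map (Fin.castLEEmb hi) Finset.univ := by
      ext k
      constructor
      · intro hk
        rw [Finset.mem_filter] at hk
        exact Finset.mem_map.mpr ⟨⟨(k : ℕ), hk.2⟩, Finset.mem_univ _, by apply Fin.ext; simp⟩
      · intro hk
        obtain ⟨q, -, rfl⟩ := Finset.mem_map.mp hk
        simp only [Finset.mem_filter]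
        refine ⟨Finset.mem_univ _, ?_⟩
        simp only [hP]
        simpa using q.2
    rw [this, Finset.card_map, Finset.card_univ, Fintype.card_fin]
  have hcard2 : (Finset.univ.filter fun k => ¬ P k).card = n - i := by
    have := Finset.card_filter_add_card_filter_not (s := Finset.univ) (p := P)
    simp only [Finset.card_univ, Fintype.card_fin] at this
    omega
  have hpos1 : 0 < ∏ k ∈ Finset.univ.filter P, (t - x k) := by
    apply Finset.prod_pos; intro k hk
    rw [Finset.mem_filter] at hk
    have := hlow k hk.2; linarith
  have hneg : ∏ k ∈ Finset.univ.filter (fun k => ¬ P k), (t - x k)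
      = (-1 : ℝ) ^ (n - i) * ∏ k ∈ Finset.univ.filter (fun k => ¬ P k), (x k - t) := by
    rw [← hcard2, ← Finset.prod_const, ← Finset.prod_mul_distrib]
    exact Finset.prod_congr rfl (by intros; ring)
  have hpos2 : 0 < ∏ k ∈ Finset.univ.filter (fun k => ¬ P k), (x k - t) := by
    apply Finset.prod_pos; intro k hk
    rw [Finset.mem_filter] at hk
    have := hhigh k (not_lt.mp hk.2); linarith
  have hparity : (-1 : ℝ) ^ (n + i) * (-1 : ℝ) ^ (n - i) = 1 := by
    rw [← pow_add]
    have : n + i + (n - i) = 2 * n := by omega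
    rw [this, pow_mul]; norm_num
  calc (0 : ℝ) < ((-1 : ℝ) ^ (n + i) * (-1 : ℝ) ^ (n - i)) *
        ((∏ k ∈ Finset.univ.filter P, (t - x k)) *
         ∏ k ∈ Finset.univ.filter (fun k => ¬ P k), (x k - t)) := by
        rw [hparity, one_mul]; exact mul_pos hpos1 hpos2
    _ = (-1 : ℝ) ^ (n + i) * ∏ k, (t - x k) := by
        rw [← hsplit, hneg]; ring

lemma chebA2 {n : ℕ} {a b : ℝ} (hab : a < b) {F : Fin n → ℝ → ℝ}
    (hF : ∀ j, ContinuousOn (F j) (Set.Icc a b))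
    (hcheb : ∀ c : Fin n → ℝ, c ≠ 0 →
      {x ∈ Set.Icc a b | ∑ j, c j * F j x = 0}.encard ≤ (n - 1 : ℕ))
    {x : Fin n → ℝ} (hx : StrictMono x) (hxmem : ∀ i, x i ∈ Set.Ioo a b)
    {c : Fin n → ℝ} (hc : c ≠ 0)
    (hineq : ∀ t ∈ Set.Icc a b, (∏ k, (t - x k)) * (∑ j, c j * F j t) ≤ 0) : False := by
  classical
  set u : ℝ → ℝ := fun t => ∑ j, c j * F j t with hu_def
  have hu : ContinuousOn u (Set.Icc a b) := by
    apply continuousOn_finset_sum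
    intro j _
    exact continuousOn_const.mul (hF j)
  have hzero : ∀ i, u (x i) = 0 := by
    intro i
    set Wi : ℝ → ℝ := fun t => ∏ k ∈ Finset.univ.erase i, (t - x k) with hWi_def
    have hWi : Continuous Wi := by
      apply continuous_finset_prod
      intro k _
      exact continuous_id.sub continuous_const
    have hfact : ∀ t : ℝ, (∏ k, (t - x k)) = (t - x i) * Wi t := fun t =>
      (Finset.mul_prod_erase Finset.univ _ (Finset.mem_univ i)).symm
    set h : ℝ → ℝ := fun t => Wi t * u t with hh_def
    have hh : ContinuousOn h (Set.Icc a b) := hWi.continuousOn.mul hu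
    have hxi := hxmem i
    have hIccmem : x i ∈ Set.Icc a b := ⟨hxi.1.le, hxi.2.le⟩
    have hright : h (x i) ≤ 0 := by
      have hne : (𝓝[Set.Ioo (x i) b] (x i)).NeBot := by
        rw [nhdsWithin_Ioo_eq_nhdsGT hxi.2]; infer_instance
      have htend : Tendsto h (𝓝[Set.Ioo (x i) b] (x i)) (𝓝 (h (x i))) :=
        (hh (x i) hIccmem).mono_left
          (nhdsWithin_mono _ (fun t ht => ⟨hxi.1.le.trans ht.1.le, ht.2.le⟩))
      refine le_of_tendsto htend ?_
      · filter_upwards [self_mem_nhdsWithin] with t ht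
        have h1 := hineq t ⟨hxi.1.le.trans ht.1.le, ht.2.le⟩
        rw [hfact t] at h1
        show Wi t * (∑ j, c j * F j t) ≤ 0
        nlinarith [sub_pos.mpr ht.1]
    have hleft : 0 ≤ h (x i) := by
      have hne : (𝓝[Set.Ioo a (x i)] (x i)).NeBot := by
        rw [nhdsWithin_Ioo_eq_nhdsLT hxi.1]; infer_instance
      have htend : Tendsto h (𝓝[Set.Ioo a (x i)] (x i)) (𝓝 (h (x i))) :=
        (hh (x i) hIccmem).mono_left
          (nhdsWithin_mono _ (fun t ht => ⟨ht.1.le, ht.2.le.trans hxi.2.le⟩))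
      refine ge_of_tendsto htend ?_
      · filter_upwards [self_mem_nhdsWithin] with t ht
        have h1 := hineq t ⟨ht.1.le, ht.2.le.trans hxi.2.le⟩
        rw [hfact t] at h1
        show 0 ≤ Wi t * (∑ j, c j * F j t)
        nlinarith [sub_neg.mpr ht.2]
    have hWine : Wi (x i) ≠ 0 := by
      rw [hWi_def]
      apply Finset.prod_ne_zero_iff.mpr
      intro k hk
      refine sub_ne_zero.mpr fun heq => ?_
      exact (Finset.mem_erase.mp hk).1 (hx.injective heq.symm)
    have h0 : h (x i) = 0 := le_antisymm hright hleft
    rw [hh_def] at h0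
    exact (mul_eq_zero.mp h0).resolve_left hWine
  have hsub : Set.range x ⊆ {t ∈ Set.Icc a b | ∑ j, c j * F j t = 0} := by
    rintro t ⟨i, rfl⟩
    exact ⟨⟨(hxmem i).1.le, (hxmem i).2.le⟩, hzero i⟩
  have h1 : (Set.range x).encard = n := by
    rw [← Set.image_univ, Set.InjOn.encard_image hx.injective.injOn]
    simp [Set.encard_univ]
  have h3 := (Set.encard_le_encard hsub).trans (hcheb c hc)
  rw [h1] at h3
  obtain ⟨j, hj⟩ := Function.ne_iff.mp hc
  have hn : 0 < n := j.pos
  have : n ≤ n - 1 := by exact_mod_cast h3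
  omega

lemma chebAux_frac (s ε : ℝ) (hε : 0 < ε) :
    |s| - Real.sqrt ε ≤ s ^ 2 / Real.sqrt (s ^ 2 + ε) := by
  have hd : 0 < Real.sqrt (s ^ 2 + ε) := Real.sqrt_pos.mpr (by positivity)
  rw [le_div_iff₀ hd]
  have h1 : Real.sqrt (s ^ 2 + ε) ≤ |s| + Real.sqrt ε := by
    rw [show s ^ 2 + ε = |s| ^ 2 + Real.sqrt ε ^ 2 by
      rw [sq_abs, Real.sq_sqrt hε.le]]
    calc Real.sqrt (|s| ^ 2 + Real.sqrt ε ^ 2)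
        ≤ Real.sqrt ((|s| + Real.sqrt ε) ^ 2) := by
          apply Real.sqrt_le_sqrt
          nlinarith [abs_nonneg s, Real.sqrt_nonneg ε]
      _ = |s| + Real.sqrt ε := Real.sqrt_sq (by positivity)
  rcases le_or_gt (|s| - Real.sqrt ε) 0 with h | h
  · nlinarith
  · nlinarith [Real.sq_sqrt hε.le, sq_abs s]

lemma chebB {n : ℕ} {a b : ℝ} (hab : a < b) {F : Fin n → ℝ → ℝ}
    (hF : ∀ j, ContinuousOn (F j) (Set.Icc a b))
    (hcheb : ∀ c : Fin n → ℝ, c ≠ 0 →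
      {x ∈ Set.Icc a b | ∑ j, c j * F j x = 0}.encard ≤ (n - 1 : ℕ))
    {x : Fin n → ℝ} (hx : StrictMono x) (hxmem : ∀ i, x i ∈ Set.Ioo a b) :
    ∃ g : ℝ → ℝ, ContinuousOn g (Set.Icc a b) ∧ (∀ t ∈ Set.Icc a b, |g t| < 1) ∧
      ∀ j, (∫ t in a..b, (∏ k, (t - x k)) * (1 + g t) * F j t) = 0 := by
  classical
  set W : ℝ → ℝ := fun t => ∏ k, (t - x k) with hW_def
  have hW : Continuous W := by
    apply continuous_finset_prod
    intro k _
    exact continuous_id.sub continuous_const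
  set S : Set (Fin n → ℝ) := {v | ∃ g : ℝ → ℝ, ContinuousOn g (Set.Icc a b) ∧
      (∀ t ∈ Set.Icc a b, |g t| < 1) ∧
      ∀ j, v j = ∫ t in a..b, W t * (1 + g t) * F j t} with hS_def
  suffices hmem : (0 : Fin n → ℝ) ∈ S by
    obtain ⟨g, hg1, hg2, hg3⟩ := hmem
    exact ⟨g, hg1, hg2, fun j => ((hg3 j).symm.trans (Pi.zero_apply j)).symm ▸ (hg3 j).symm⟩
  by_contra h0
  have hIccNe : (Set.Icc a b).Nonempty := ⟨a, le_refl a, hab.le⟩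
  have hii : ∀ {g : ℝ → ℝ}, ContinuousOn g (Set.Icc a b) →
      IntervalIntegrable g volume a b := fun hg => chebAux_intInt hab.le hg
  have hsum_cont : ∀ c : Fin n → ℝ,
      ContinuousOn (fun t => ∑ k, c k * F k t) (Set.Icc a b) := by
    intro c
    apply continuousOn_finset_sum
    intro k _
    exact continuousOn_const.mul (hF k)
  -- the Gram-type linear map
  set Φ : (Fin n → ℝ) → (Fin n → ℝ) :=
    fun c j => ∫ t in a..b, W t * (W t * ∑ k, c k * F k t) * F j t with hΦ_def
  have hΦint : ∀ (c : Fin n → ℝ) j,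
      IntervalIntegrable (fun t => W t * (W t * ∑ k, c k * F k t) * F j t) volume a b :=
    fun c j => hii ((hW.continuousOn.mul (hW.continuousOn.mul (hsum_cont c))).mul (hF j))
  have hΦadd : ∀ c₁ c₂, Φ (c₁ + c₂) = Φ c₁ + Φ c₂ := by
    intro c₁ c₂
    funext j
    have hpt : (fun t => W t * (W t * ∑ k, (c₁ k + c₂ k) * F k t) * F j t)
        = fun t => W t * (W t * ∑ k, c₁ k * F k t) * F j t
          + W t * (W t * ∑ k, c₂ k * F k t) * F j t := by
      funext t
      simp only [add_mul, Finset.sum_add_distrib]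
      ring
    simp only [hΦ_def, Pi.add_apply]
    rw [hpt, intervalIntegral.integral_add (hΦint c₁ j) (hΦint c₂ j)]
  have hΦsmul : ∀ (r : ℝ) (c : Fin n → ℝ), Φ (r • c) = r • Φ c := by
    intro r c
    funext j
    have hpt : (fun t => W t * (W t * ∑ k, r * c k * F k t) * F j t)
        = fun t => r * (W t * (W t * ∑ k, c k * F k t) * F j t) := by
      funext t
      rw [show (∑ k, r * c k * F k t) = r * ∑ k, c k * F k t by
        rw [Finset.mul_sum]; exact Finset.sum_congr rfl fun k _ => by ring]
      ring
    simp only [hΦ_def, Pi.smul_apply, smul_eq_mul]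
    rw [hpt, intervalIntegral.integral_const_mul]
  set Φlin : (Fin n → ℝ) →ₗ[ℝ] (Fin n → ℝ) :=
    { toFun := Φ, map_add' := hΦadd, map_smul' := hΦsmul } with hΦlin_def
  have hΦinj : Function.Injective Φlin := by
    rw [injective_iff_map_eq_zero]
    intro c hc0
    by_contra hcne
    have hc0' : ∀ j, Φ c j = 0 := fun j => congrFun hc0 j
    have h1 : (∑ j, c j * Φ c j) = ∫ t in a..b, (W t * ∑ k, c k * F k t) ^ 2 := by
      have e1 : ∀ j, c j * Φ c j
          = ∫ t in a..b, c j * (W t * (W t * ∑ k, c k * F k t) * F j t) := by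
        intro j
        rw [intervalIntegral.integral_const_mul]
      rw [Finset.sum_congr rfl fun j _ => e1 j,
        ← intervalIntegral.integral_finsetSum
          (fun j _ => (hΦint c j).const_mul (c j))]
      apply intervalIntegral.integral_congr
      intro t _
      calc (∑ j, c j * (W t * (W t * ∑ k, c k * F k t) * F j t))
          = ∑ j, (W t * (W t * ∑ k, c k * F k t)) * (c j * F j t) :=
            Finset.sum_congr rfl fun j _ => by ring
        _ = (W t * (W t * ∑ k, c k * F k t)) * ∑ j, c j * F j t :=
            (Finset.mul_sum _ _ _).symm
        _ = (W t * ∑ k, c k * F k t) ^ 2 := by ring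
    have h2 : (∫ t in a..b, (W t * ∑ k, c k * F k t) ^ 2) = 0 := by
      rw [← h1]
      simp [hc0']
    have h3 := chebAux_zero hab ((hW.continuousOn.mul (hsum_cont c)).pow 2)
      (fun t _ => sq_nonneg _) h2.le
    apply chebA1 hab hcheb x hcne
    intro t ht
    have h4 : W t * ∑ k, c k * F k t = 0 := by
      have := h3 t ht.1
      exact sq_eq_zero_iff.mp this
    have hWt : W t ≠ 0 := by
      rw [hW_def]
      apply Finset.prod_ne_zero_iff.mpr
      intro k _
      exact sub_ne_zero.mpr fun heq => ht.2 ⟨k, heq.symm⟩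
    exact (mul_eq_zero.mp h4).resolve_left hWt
  have hΦsurj : Function.Surjective Φlin := LinearMap.surjective_of_injective hΦinj
  set Ψ := LinearEquiv.ofBijective Φlin ⟨hΦinj, hΦsurj⟩ with hΨ_def
  have hΨcont : Continuous fun w : Fin n → ℝ => Ψ.symm w :=
    LinearMap.continuous_of_finiteDimensional (Ψ.symm : (Fin n → ℝ) →ₗ[ℝ] (Fin n → ℝ))
  -- uniform bound
  set B : ℝ → ℝ := fun t => |W t| * ∑ k, |F k t| with hB_def
  have hB : ContinuousOn B (Set.Icc a b) := by
    apply (hW.abs.continuousOn).mul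
    apply continuousOn_finset_sum
    intro k _
    exact (hF k).abs
  obtain ⟨C, hC⟩ := isCompact_Icc.exists_bound_of_continuousOn hB
  have hC0 : 0 ≤ C := le_trans (norm_nonneg _) (hC a ⟨le_refl a, hab.le⟩)
  have hgcb : ∀ (c : Fin n → ℝ), ∀ t ∈ Set.Icc a b,
      |W t * ∑ k, c k * F k t| ≤ ‖c‖ * C := by
    intro c t ht
    calc |W t * ∑ k, c k * F k t| = |W t| * |∑ k, c k * F k t| := abs_mul _ _
      _ ≤ |W t| * ∑ k, |c k * F k t| := by
          apply mul_le_mul_of_nonneg_left (Finset.abs_sum_le_sum_abs _ _) (abs_nonneg _)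
      _ ≤ |W t| * ∑ k, ‖c‖ * |F k t| := by
          apply mul_le_mul_of_nonneg_left _ (abs_nonneg _)
          apply Finset.sum_le_sum
          intro k _
          rw [abs_mul]
          exact mul_le_mul_of_nonneg_right (norm_le_pi_norm c k) (abs_nonneg _)
      _ = ‖c‖ * (|W t| * ∑ k, |F k t|) := by rw [← Finset.mul_sum]; ring
      _ ≤ ‖c‖ * C := by
          apply mul_le_mul_of_nonneg_left _ (norm_nonneg c)
          exact le_trans (le_abs_self _) (hC t ht)
  -- S is convex
  have hconv : Convex ℝ S := by
    intro v₁ hv₁ v₂ hv₂ θ₁ θ₂ hθ₁ hθ₂ hsum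
    obtain ⟨g₁, hg₁c, hg₁b, hg₁i⟩ := hv₁
    obtain ⟨g₂, hg₂c, hg₂b, hg₂i⟩ := hv₂
    refine ⟨fun t => θ₁ * g₁ t + θ₂ * g₂ t,
      (continuousOn_const.mul hg₁c).add (continuousOn_const.mul hg₂c), ?_, ?_⟩
    · intro t ht
      show |θ₁ * g₁ t + θ₂ * g₂ t| < 1
      have b1 := abs_lt.mp (hg₁b t ht)
      have b2 := abs_lt.mp (hg₂b t ht)
      rcases lt_or_eq_of_le hθ₁ with h | h
      · have k1 := mul_lt_mul_of_pos_left b1.2 h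
        have k2 := mul_lt_mul_of_pos_left b1.1 h
        have k3 := mul_le_mul_of_nonneg_left b2.2.le hθ₂
        have k4 := mul_le_mul_of_nonneg_left b2.1.le hθ₂
        rw [abs_lt]; constructor <;> nlinarith
      · have hθ₂1 : θ₂ = 1 := by linarith
        rw [← h, hθ₂1]
        simpa using hg₂b t ht
    · intro j
      have int1 : IntervalIntegrable (fun t => θ₁ * (W t * (1 + g₁ t) * F j t)) volume a b :=
        (hii ((hW.continuousOn.mul (continuousOn_const.add hg₁c)).mul (hF j))).const_mul θ₁
      have int2 : IntervalIntegrable (fun t => θ₂ * (W t * (1 + g₂ t) * F j t)) volume a b :=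
        (hii ((hW.continuousOn.mul (continuousOn_const.add hg₂c)).mul (hF j))).const_mul θ₂
      simp only [Pi.add_apply, Pi.smul_apply, smul_eq_mul, hg₁i j, hg₂i j]
      rw [← intervalIntegral.integral_const_mul, ← intervalIntegral.integral_const_mul,
        ← intervalIntegral.integral_add int1 int2]
      apply intervalIntegral.integral_congr
      intro t _
      simp only
      linear_combination (W t * F j t) * hsum
  -- S is open
  have hopen : IsOpen S := by
    rw [Metric.isOpen_iff]
    intro v₀ hv₀
    obtain ⟨g₀, hg₀c, hg₀b, hg₀i⟩ := hv₀
    obtain ⟨t₀, ht₀, hmax⟩ := isCompact_Icc.exists_isMaxOn hIccNe hg₀c.abs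
    set r := |g₀ t₀| with hr_def
    have hr1 : r < 1 := hg₀b t₀ ht₀
    have hr0 : 0 ≤ r := abs_nonneg _
    set ν := (1 - r) / (2 * (C + 1)) with hν_def
    have hνpos : 0 < ν := div_pos (by linarith) (by linarith)
    obtain ⟨δ, hδpos, hδ⟩ := Metric.continuous_iff.mp hΨcont 0 ν hνpos
    refine ⟨δ, hδpos, ?_⟩
    intro v hv
    set c : Fin n → ℝ := Ψ.symm (v - v₀) with hc_def
    have hc : Φlin c = v - v₀ := Ψ.apply_symm_apply (v - v₀)
    have hcn : ‖c‖ < ν := by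
      have h1 : dist (v - v₀) 0 < δ := by
        rw [dist_zero_right, ← dist_eq_norm]
        exact Metric.mem_ball.mp hv
      have := hδ (v - v₀) h1
      rwa [map_zero, dist_zero_right] at this
    have hcC : ‖c‖ * C < (1 - r) / 2 := by
      calc ‖c‖ * C ≤ ν * C := mul_le_mul_of_nonneg_right hcn.le hC0
        _ < ν * (C + 1) := by nlinarith
        _ = (1 - r) / 2 := by rw [hν_def]; field_simp
    refine ⟨fun t => g₀ t + W t * ∑ k, c k * F k t,
      hg₀c.add (hW.continuousOn.mul (hsum_cont c)), ?_, ?_⟩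
    · intro t ht
      have h1 := hgcb c t ht
      have h2 : |g₀ t| ≤ r := hmax ht
      calc |g₀ t + W t * ∑ k, c k * F k t| ≤ |g₀ t| + |W t * ∑ k, c k * F k t| := abs_add_le _ _
        _ ≤ r + ‖c‖ * C := add_le_add h2 h1
        _ < r + (1 - r) / 2 := by linarith
        _ ≤ 1 := by linarith
      -- careful: need < 1 strictly; r + (1-r)/2 = (1+r)/2 < 1
    · intro j
      have int1 : IntervalIntegrable (fun t => W t * (1 + g₀ t) * F j t) volume a b :=
        hii ((hW.continuousOn.mul (continuousOn_const.add hg₀c)).mul (hF j))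
      have int2 := hΦint c j
      have hsplit : (fun t => W t * (1 + (g₀ t + W t * ∑ k, c k * F k t)) * F j t)
          = fun t => W t * (1 + g₀ t) * F j t
            + W t * (W t * ∑ k, c k * F k t) * F j t := by
        funext t
        ring
      rw [hsplit, intervalIntegral.integral_add int1 int2, ← hg₀i j]
      have h2 : (∫ t in a..b, W t * (W t * ∑ k, c k * F k t) * F j t) = v j - v₀ j := by
        have := congrFun hc j
        exact this
      rw [h2]
      ring
  -- separation
  obtain ⟨φ, hφ⟩ := geometric_hahn_banach_open_point hconv hopen h0
  set c : Fin n → ℝ := fun j => φ (fun k => if j = k then 1 else 0) with hc_def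
  have hφrep : ∀ v : Fin n → ℝ, φ v = ∑ j, v j * c j := by
    intro v
    conv_lhs => rw [pi_eq_sum_univ v]
    rw [map_sum]
    apply Finset.sum_congr rfl
    intro j _
    rw [_root_.map_smul, smul_eq_mul]
  set u : ℝ → ℝ := fun t => ∑ j, c j * F j t with hu_def
  have hu_cont : ContinuousOn u (Set.Icc a b) := hsum_cont c
  have hkey : ∀ (g : ℝ → ℝ), ContinuousOn g (Set.Icc a b) →
      (∀ t ∈ Set.Icc a b, |g t| < 1) →
      (∫ t in a..b, W t * (1 + g t) * u t) < 0 := by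
    intro g hg hgb
    have hvS : (fun j => ∫ t in a..b, W t * (1 + g t) * F j t) ∈ S :=
      ⟨g, hg, hgb, fun j => rfl⟩
    have h1 := hφ _ hvS
    rw [map_zero, hφrep] at h1
    have h2 : (∫ t in a..b, W t * (1 + g t) * u t)
        = ∑ j, (∫ t in a..b, W t * (1 + g t) * F j t) * c j := by
      have e1 : ∀ j, (∫ t in a..b, W t * (1 + g t) * F j t) * c j
          = ∫ t in a..b, (W t * (1 + g t) * F j t) * c j := by
        intro j
        rw [intervalIntegral.integral_mul_const]
      rw [Finset.sum_congr rfl fun j _ => e1 j,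
        ← intervalIntegral.integral_finsetSum (f := fun j t => W t * (1 + g t) * F j t * c j)
          (fun j _ => (hii ((hW.continuousOn.mul (continuousOn_const.add hg)).mul
            (hF j))).mul_const (c j))]
      apply intervalIntegral.integral_congr
      intro t _
      calc W t * (1 + g t) * u t
          = W t * (1 + g t) * ∑ j, c j * F j t := rfl
        _ = ∑ j, (W t * (1 + g t)) * (c j * F j t) := by rw [Finset.mul_sum]
        _ = ∑ j, (W t * (1 + g t) * F j t) * c j :=
            Finset.sum_congr rfl fun j _ => by ring
    rw [h2]
    exact h1
  have hcne : c ≠ 0 := by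
    intro hc0
    have h1 := hkey (fun _ => 0) continuousOn_const (by intro t _; norm_num)
    have h2 : (∫ t in a..b, W t * (1 + (0:ℝ)) * u t) = 0 := by
      have : (fun t => W t * (1 + (0:ℝ)) * u t) = fun _ => (0:ℝ) := by
        funext t
        rw [hu_def]
        simp only [hc0, Pi.zero_apply, zero_mul, Finset.sum_const_zero, mul_zero]
      rw [this, intervalIntegral.integral_zero]
    rw [h2] at h1
    exact lt_irrefl 0 h1
  have hWu_cont : ContinuousOn (fun t => W t * u t) (Set.Icc a b) :=
    hW.continuousOn.mul hu_cont
  have hfinal : ∀ t ∈ Set.Icc a b, W t * u t ≤ 0 := by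
    have hA : (∫ t in a..b, (W t * u t + |W t * u t|)) ≤ 0 := by
      by_contra hA'
      push_neg at hA'
      set A := ∫ t in a..b, (W t * u t + |W t * u t|) with hA_def
      have hApos : 0 < A := hA'
      have hba : 0 < b - a := by linarith
      have hq : 0 < A / (2 * (b - a)) := div_pos hApos (by linarith)
      set ε := (A / (2 * (b - a))) ^ 2 with hε_def
      have hεpos : 0 < ε := pow_pos hq 2
      set gε := fun t => W t * u t / Real.sqrt ((W t * u t) ^ 2 + ε) with hgε_def
      have hd : ∀ t : ℝ, 0 < Real.sqrt ((W t * u t) ^ 2 + ε) :=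
        fun t => Real.sqrt_pos.mpr (by positivity)
      have hgεc : ContinuousOn gε (Set.Icc a b) := by
        apply hWu_cont.div
          (Real.continuous_sqrt.comp_continuousOn ((hWu_cont.pow 2).add continuousOn_const))
        exact fun t _ => (hd t).ne'
      have hgεb : ∀ t ∈ Set.Icc a b, |gε t| < 1 := by
        intro t _
        rw [hgε_def]
        simp only
        rw [abs_div, abs_of_pos (hd t), div_lt_one (hd t),
          show |W t * u t| = Real.sqrt ((W t * u t) ^ 2) from (Real.sqrt_sq_eq_abs _).symm]
        exact Real.sqrt_lt_sqrt (by positivity) (by linarith)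
      have h1 := hkey gε hgεc hgεb
      have intWu : IntervalIntegrable (fun t => W t * u t) volume a b := hii hWu_cont
      have intWgu : IntervalIntegrable (fun t => W t * gε t * u t) volume a b :=
        hii ((hW.continuousOn.mul hgεc).mul hu_cont)
      have intabs : IntervalIntegrable (fun t => |W t * u t|) volume a b := hii hWu_cont.abs
      have hsplit : (∫ t in a..b, W t * (1 + gε t) * u t)
          = (∫ t in a..b, W t * u t) + ∫ t in a..b, W t * gε t * u t := by
        rw [← intervalIntegral.integral_add intWu intWgu]
        apply intervalIntegral.integral_congr
        intro t _
        simp only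
        ring
      have h2 : (∫ t in a..b, (|W t * u t| - Real.sqrt ε))
          ≤ ∫ t in a..b, W t * gε t * u t := by
        apply intervalIntegral.integral_mono_on hab.le
          (intabs.sub intervalIntegrable_const) intWgu
        intro t _
        have heq : W t * gε t * u t = (W t * u t) ^ 2 / Real.sqrt ((W t * u t) ^ 2 + ε) := by
          rw [hgε_def]
          simp only
          field_simp
        rw [heq]
        exact chebAux_frac (W t * u t) ε hεpos
      have h3 : (∫ t in a..b, (|W t * u t| - Real.sqrt ε))
          = (∫ t in a..b, |W t * u t|) - Real.sqrt ε * (b - a) := by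
        rw [intervalIntegral.integral_sub intabs intervalIntegrable_const,
          intervalIntegral.integral_const, smul_eq_mul]
        ring
      have hAsplit : A = (∫ t in a..b, W t * u t) + ∫ t in a..b, |W t * u t| := by
        rw [hA_def, intervalIntegral.integral_add intWu intabs]
      have hsq : Real.sqrt ε = A / (2 * (b - a)) := by
        rw [hε_def, Real.sqrt_sq hq.le]
      have hεb : Real.sqrt ε * (b - a) = A / 2 := by
        rw [hsq]
        field_simp
      linarith
    have hq := chebAux_zero (q := fun t => W t * u t + |W t * u t|) hab (hWu_cont.add hWu_cont.abs)
      (fun t _ => by linarith [neg_abs_le (W t * u t)]) hA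
    intro t ht
    have := hq t ht
    have h2 := le_abs_self (W t * u t)
    linarith
  exact chebA2 hab hF hcheb hx hxmem hcne hfinal


/-- Sharpness (interval case): given a Chebyshev system of order `n` on `[a,b]` and
points `a < x₁ < ⋯ < xₙ < b`, there is a continuous function on `[a,b]` vanishing
exactly at these points, with alternating nonzero constant sign on the `n+1`
subintervals they determine, which is orthogonal (weight `1`) to the system.
Here `y = Fin.cons a (Fin.snoc x b)` is the extended sequence
`a = y₀ < y₁ = x₁ < ⋯ < yₙ = xₙ < yₙ₊₁ = b`. -/
theorem exists_orthogonal_with_prescribed_sign_changes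
    (n : ℕ) (a b : ℝ) (hab : a < b) (F : Fin n → ℝ → ℝ)
    (hF : ∀ j, ContinuousOn (F j) (Set.Icc a b))
    (hcheb : ∀ c : Fin n → ℝ, c ≠ 0 →
      {x ∈ Set.Icc a b | ∑ j, c j * F j x = 0}.encard ≤ (n - 1 : ℕ))
    (x : Fin n → ℝ) (hx : StrictMono x) (hxmem : ∀ i, x i ∈ Set.Ioo a b) :
    ∃ f : ℝ → ℝ, ContinuousOn f (Set.Icc a b) ∧
      (∀ t ∈ Set.Icc a b, (f t = 0 ↔ ∃ i, x i = t)) ∧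
      (∃ ε : ℝ, (ε = 1 ∨ ε = -1) ∧ ∀ i : Fin (n + 1),
        ∀ t ∈ Set.Ioo ((Fin.cons a (Fin.snoc x b) : Fin (n + 2) → ℝ) i.castSucc)
          ((Fin.cons a (Fin.snoc x b) : Fin (n + 2) → ℝ) i.succ),
          0 < ε * (-1) ^ (i : ℕ) * f t) ∧
      ∀ j, ∫ t in a..b, f t * F j t = 0 := by
  classical
  obtain ⟨g, hgc, hgb, hgi⟩ := chebB hab hF hcheb hx hxmem
  set W : ℝ → ℝ := fun t => ∏ k, (t - x k) with hW_def
  have hW : Continuous W := by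
    apply continuous_finset_prod
    intro k _
    exact continuous_id.sub continuous_const
  set y : Fin (n + 2) → ℝ := (Fin.cons a (Fin.snoc x b) : Fin (n + 2) → ℝ) with hy_def
  have hys : ∀ i : Fin (n + 1), y i.succ = (Fin.snoc x b : Fin (n + 1) → ℝ) i := by
    intro i
    rw [hy_def]
    exact Fin.cons_succ _ _ _
  have hyc0 : y ((0 : Fin (n + 1)).castSucc) = a := by
    rw [hy_def]
    simp
  have hycs : ∀ j : Fin n, y ((j.succ).castSucc) = x j := by
    intro j
    rw [hy_def, ← Fin.succ_castSucc, Fin.cons_succ, Fin.snoc_castSucc]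
  have hya : ∀ i : Fin (n + 1), a ≤ y i.castSucc := by
    intro i
    induction i using Fin.cases with
    | zero => rw [hyc0]
    | succ j => rw [hycs j]; exact (hxmem j).1.le
  have hyb : ∀ i : Fin (n + 1), y i.succ ≤ b := by
    intro i
    rw [hys i]
    induction i using Fin.lastCases with
    | last => rw [Fin.snoc_last]
    | cast m => rw [Fin.snoc_castSucc]; exact (hxmem m).2.le
  refine ⟨fun t => W t * (1 + g t), ?_, ?_, ?_, ?_⟩
  · exact hW.continuousOn.mul (continuousOn_const.add hgc)
  · intro t ht
    have h1g : 0 < 1 + g t := by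
      have := abs_lt.mp (hgb t ht)
      linarith
    constructor
    · intro hft
      have hWt : W t = 0 := by
        rcases mul_eq_zero.mp hft with h | h
        · exact h
        · linarith
      rw [hW_def] at hWt
      obtain ⟨i, _, hi⟩ := Finset.prod_eq_zero_iff.mp hWt
      exact ⟨i, (sub_eq_zero.mp hi).symm⟩
    · rintro ⟨i, hi⟩
      have hWt : W t = 0 := by
        rw [hW_def]
        exact Finset.prod_eq_zero (Finset.mem_univ i) (by rw [hi]; ring)
      show W t * (1 + g t) = 0
      rw [hWt, zero_mul]
  · refine ⟨(-1 : ℝ) ^ n, ?_, ?_⟩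
    · rcases Nat.even_or_odd n with h | h
      · left; exact h.neg_one_pow
      · right; exact h.neg_one_pow
    · intro i t ht
      have htIcc : t ∈ Set.Icc a b := ⟨(hya i).trans ht.1.le, ht.2.le.trans (hyb i)⟩
      have hlow : ∀ k : Fin n, (k : ℕ) < (i : ℕ) → x k < t := by
        intro k hk
        refine lt_of_le_of_lt ?_ ht.1
        induction i using Fin.cases with
        | zero => simp at hk
        | succ j =>
          rw [hycs j]
          apply hx.monotone
          rw [Fin.le_def]
          simp only [Fin.val_succ] at hk
          omega
      have hhigh : ∀ k : Fin n, (i : ℕ) ≤ (k : ℕ) → t < x k := by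
        intro k hk
        refine lt_of_lt_of_le ht.2 ?_
        have hin : (i : ℕ) < n := lt_of_le_of_lt hk k.isLt
        have hieq : i = (⟨(i : ℕ), hin⟩ : Fin n).castSucc := by
          apply Fin.ext
          simp
        rw [hieq, hys, Fin.snoc_castSucc]
        apply hx.monotone
        rw [Fin.le_def]
        exact hk
      have hsgn := chebSign (x := x) (i : ℕ) (Nat.lt_succ_iff.mp i.isLt) hlow hhigh
      have h1g : 0 < 1 + g t := by
        have := abs_lt.mp (hgb t htIcc)
        linarith
      show 0 < (-1 : ℝ) ^ n * (-1) ^ (i : ℕ) * (W t * (1 + g t))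
      have h2 := mul_pos hsgn h1g
      calc (0 : ℝ) < ((-1) ^ (n + (i : ℕ)) * W t) * (1 + g t) := h2
        _ = (-1 : ℝ) ^ n * (-1) ^ (i : ℕ) * (W t * (1 + g t)) := by
            rw [pow_add]; ring
  · intro j
    exact hgi j
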